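/- arXiv:2109.02565 — 2 statements merged into one kernel-verified Lean document; each statement's English description precedes it below -/
import Mathlib

section
/- There is an absolute constant C such that for all s ∈ (0,1], all α > 0, all y ∈ ℝ, and all odd differentiable functions g, h : ℝ → ℝ with g, g', h, h' square-integrable: |δ_α[L_s, g](y)| ≤ C·s·‖g‖_{H¹}·min{α^{1/2}, α^{−1/2}}, and |δ_α[g, h](y)| ≤ C·‖g‖_{H¹}·‖h‖_{H¹}·min{α^{1/2}, α^{−1}}. -/
open MeasureTheory Real Set Filter

/-- Sliding average `⨍_α f(y) = (1/α) ∫_{y-α}^{y} f(z) dz`. -/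
noncomputable def fint (α : ℝ) (f : ℝ → ℝ) (y : ℝ) : ℝ :=
  (1 / α) * ∫ z in (y - α)..y, f z

/-- Finite difference slope `Δ_α f(y) = (f(y) - f(y-α))/α`. -/
noncomputable def slopeOp (α : ℝ) (f : ℝ → ℝ) (y : ℝ) : ℝ :=
  (f y - f (y - α)) / α

/-- The profile `L_s(y) = (2s/π) arctan((1+s²/3) y)`. -/
noncomputable def Ls (s y : ℝ) : ℝ := (2 * s / Real.pi) * Real.arctan ((1 + s ^ 2 / 3) * y)

/-- `δ_α[f,g](y) = ⨍_α f ⨍_α g - ⨍_{-α} f ⨍_{-α} g`. -/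
noncomputable def deltaOp (α : ℝ) (f g : ℝ → ℝ) (y : ℝ) : ℝ :=
  fint α f y * fint α g y - fint (-α) f y * fint (-α) g y

/-- `J_α[f,g](y) = ⨍_α f ⨍_α g - 2 f g + ⨍_{-α} f ⨍_{-α} g`. -/
noncomputable def Jop (α : ℝ) (f g : ℝ → ℝ) (y : ℝ) : ℝ :=
  fint α f y * fint α g y - 2 * f y * g y + fint (-α) f y * fint (-α) g y

/-- The `H¹` norm `(∫ g² + ∫ (g')²)^{1/2}`. -/
noncomputable def H1norm (g : ℝ → ℝ) : ℝ :=
  Real.sqrt ((∫ y : ℝ, g y ^ 2) + ∫ y : ℝ, deriv g y ^ 2)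

/-! ### Auxiliary lemmas -/

section Aux

open intervalIntegral

lemma arctan_lip (a b : ℝ) : |Real.arctan a - Real.arctan b| ≤ |a - b| := by
  have := Convex.norm_image_sub_le_of_norm_hasDerivWithin_le
    (f := Real.arctan) (f' := fun x => 1/(1+x^2)) (s := Set.univ) (C := 1)
    (fun x _ => (Real.hasDerivAt_arctan x).hasDerivWithinAt)
    (fun x _ => by
      rw [Real.norm_eq_abs, abs_of_pos (by positivity)]
      rw [div_le_one (by positivity)]; nlinarith [sq_nonneg x])
    convex_univ (Set.mem_univ b) (Set.mem_univ a)
  simpa [Real.norm_eq_abs] using this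

lemma cs_integral (f k : ℝ → ℝ) (hf : MemLp f 2 volume) (hk : MemLp k 2 volume) :
    ∫ x, |f x * k x| ≤ Real.sqrt (∫ x, (f x)^2) * Real.sqrt (∫ x, (k x)^2) := by
  have hfn : MemLp (fun x => ‖f x‖) 2 volume := hf.norm
  have hkn : MemLp (fun x => ‖k x‖) 2 volume := hk.norm
  set F : Lp ℝ 2 volume := hfn.toLp _
  set K : Lp ℝ 2 volume := hkn.toLp _
  have hFc : (F : ℝ → ℝ) =ᵐ[volume] fun x => ‖f x‖ := hfn.coeFn_toLp
  have hKc : (K : ℝ → ℝ) =ᵐ[volume] fun x => ‖k x‖ := hkn.coeFn_toLp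
  have h1 : ∫ x, |f x * k x| = (inner ℝ F K : ℝ) := by
    rw [L2.inner_def]
    refine integral_congr_ae ?_
    filter_upwards [hFc, hKc] with x hx hy
    simp [hx, hy, RCLike.inner_apply, abs_mul, Real.norm_eq_abs]
    ring
  have h2 : ‖F‖ = Real.sqrt (∫ x, (f x)^2) := by
    rw [norm_eq_sqrt_real_inner, L2.inner_def]
    congr 1
    refine integral_congr_ae ?_
    filter_upwards [hFc] with x hx
    simp [hx, RCLike.inner_apply, Real.norm_eq_abs, sq_abs, sq]
  have h3 : ‖K‖ = Real.sqrt (∫ x, (k x)^2) := by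
    rw [norm_eq_sqrt_real_inner, L2.inner_def]
    congr 1
    refine integral_congr_ae ?_
    filter_upwards [hKc] with x hx
    simp [hx, RCLike.inner_apply, Real.norm_eq_abs, sq_abs, sq]
  rw [h1, ← h2, ← h3]
  exact real_inner_le_norm F K

lemma interval_cs (f : ℝ → ℝ) (hf : MemLp f 2 volume) {a b : ℝ} (hab : a ≤ b) :
    |∫ x in a..b, f x| ≤ Real.sqrt (b - a) * Real.sqrt (∫ x, (f x)^2) := by
  set k : ℝ → ℝ := (Set.Ioc a b).indicator (fun _ => (1:ℝ)) with hkdef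
  have hk : MemLp k 2 volume :=
    memLp_indicator_const 2 measurableSet_Ioc 1 (Or.inr (by
      simp [Real.volume_Ioc]))
  have h1 : |∫ x in a..b, f x| ≤ ∫ x in Set.Ioc a b, |f x| := by
    rw [intervalIntegral.integral_of_le hab]
    exact (norm_integral_le_integral_norm f)
  have h2 : ∫ x in Set.Ioc a b, |f x| = ∫ x, |f x * k x| := by
    rw [← MeasureTheory.integral_indicator measurableSet_Ioc]
    refine integral_congr_ae (Filter.Eventually.of_forall fun x => ?_)
    by_cases hx : x ∈ Set.Ioc a b <;> simp [hkdef, hx]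
  have h3 : ∫ x, (k x)^2 = b - a := by
    have : (fun x => (k x)^2) = (Set.Ioc a b).indicator (fun _ => (1:ℝ)) := by
      funext x; by_cases hx : x ∈ Set.Ioc a b <;> simp [hkdef, hx]
    rw [this, integral_indicator_const _ measurableSet_Ioc]
    simp [Real.volume_Ioc, ENNReal.toReal_ofReal (by linarith : (0:ℝ) ≤ b - a), hab]
  calc |∫ x in a..b, f x| ≤ ∫ x, |f x * k x| := h2 ▸ h1
    _ ≤ Real.sqrt (∫ x, (f x)^2) * Real.sqrt (∫ x, (k x)^2) := cs_integral f k hf hk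
    _ = Real.sqrt (b - a) * Real.sqrt (∫ x, (f x)^2) := by rw [h3, mul_comm]

lemma l2_intervalIntegrable (f : ℝ → ℝ) (hf : MemLp f 2 volume) (a b : ℝ) :
    IntervalIntegrable f volume a b := by
  rw [intervalIntegrable_iff]
  have h1 : MemLp f 2 (volume.restrict (Set.uIoc a b)) := hf.restrict _
  have : Fact (volume (Set.uIoc a b) < ⊤) := ⟨by
    apply lt_of_le_of_lt (measure_mono Set.uIoc_subset_uIcc)
    exact Real.volume_Icc ▸ ENNReal.ofReal_lt_top⟩
  have : IsFiniteMeasure (volume.restrict (Set.uIoc a b)) := by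
    constructor; simp only [Measure.restrict_apply_univ]; exact this.out
  exact (h1.mono_exponent (by norm_num)).integrable le_rfl

lemma l2_mul_integrable (f k : ℝ → ℝ) (hf : MemLp f 2 volume) (hk : MemLp k 2 volume) :
    Integrable (fun x => f x * k x) volume := by
  rw [← memLp_one_iff_integrable]
  have := hf.smul (φ := k) hk (p := 2) (q := 2) (r := 1)
  have h2 : (k * f : ℝ → ℝ) = fun x => f x * k x := by funext x; exact mul_comm _ _
  simpa [smul_eq_mul, h2] using this

lemma sup_bound (g : ℝ → ℝ) (hodd : ∀ x, g (-x) = -g x) (hdiff : Differentiable ℝ g)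
    (hg : MemLp g 2 volume) (hg' : MemLp (deriv g) 2 volume) (y : ℝ) :
    |g y| ≤ Real.sqrt ((∫ x, g x ^2) + ∫ x, deriv g x ^2) := by
  have g0 : g 0 = 0 := by have := hodd 0; simp at this; linarith
  have hgg' : Integrable (fun x => g x * deriv g x) volume := l2_mul_integrable _ _ hg hg'
  have hint : IntervalIntegrable (fun x => 2 * (g x * deriv g x)) volume 0 y :=
    (hgg'.const_mul 2).intervalIntegrable
  have ftc : ∫ x in (0:ℝ)..y, 2 * (g x * deriv g x) = g y ^ 2 - g 0 ^ 2 := by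
    refine integral_eq_sub_of_hasDerivAt (f := fun x => g x ^ 2) (fun x _ => ?_) hint
    have := ((hdiff x).hasDerivAt (x := x)).pow 2
    refine this.congr_deriv ?_
    push_cast
    ring
  have key : g y ^ 2 ≤ 2 * ∫ x, |g x * deriv g x| := by
    have h1 : g y ^ 2 = ∫ x in (0:ℝ)..y, 2 * (g x * deriv g x) := by
      rw [ftc, g0]; ring
    rw [h1]
    calc (∫ x in (0:ℝ)..y, 2 * (g x * deriv g x))
        ≤ |∫ x in (0:ℝ)..y, 2 * (g x * deriv g x)| := le_abs_self _
      _ ≤ ∫ x in Set.uIoc (0:ℝ) y, |2 * (g x * deriv g x)| := by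
          have := norm_integral_le_integral_norm_uIoc
            (f := fun x => 2 * (g x * deriv g x)) (a := (0:ℝ)) (b := y) (μ := volume)
          simp only [Real.norm_eq_abs] at this
          exact this
      _ ≤ ∫ x, |2 * (g x * deriv g x)| := by
          refine setIntegral_le_integral ((hgg'.const_mul 2).abs) ?_
          exact Filter.Eventually.of_forall (fun x => abs_nonneg _)
      _ = 2 * ∫ x, |g x * deriv g x| := by
          rw [← MeasureTheory.integral_const_mul]
          exact integral_congr_ae (Filter.Eventually.of_forall fun x => by
            simp [abs_mul])
  set A := Real.sqrt (∫ x, g x ^2)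
  set B := Real.sqrt (∫ x, deriv g x ^2)
  have hA : A ^ 2 = ∫ x, g x ^2 := Real.sq_sqrt (integral_nonneg fun x => sq_nonneg _)
  have hB : B ^ 2 = ∫ x, deriv g x ^2 := Real.sq_sqrt (integral_nonneg fun x => sq_nonneg _)
  have hcs : ∫ x, |g x * deriv g x| ≤ A * B := cs_integral _ _ hg hg'
  have h2 : g y ^ 2 ≤ (∫ x, g x ^2) + ∫ x, deriv g x ^2 := by
    nlinarith [sq_nonneg (A - B), key, hcs]
  calc |g y| = Real.sqrt (g y ^ 2) := (Real.sqrt_sq_eq_abs _).symm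
    _ ≤ _ := Real.sqrt_le_sqrt h2

lemma fint_neg (α : ℝ) (hα : α ≠ 0) (f : ℝ → ℝ) (y : ℝ) :
    fint (-α) f y = (1/α) * ∫ z in y..(y+α), f z := by
  unfold fint
  rw [show y - -α = y + α by ring, integral_symm y (y+α)]
  field_simp

lemma fint_abs_le_const (α : ℝ) (hα : α ≠ 0) (f : ℝ → ℝ) (y M : ℝ)
    (hM : ∀ z, |f z| ≤ M) : |fint α f y| ≤ M := by
  unfold fint
  have h := intervalIntegral.norm_integral_le_of_norm_le_const
    (a := y - α) (b := y) (C := M) (f := f) (fun x _ => hM x)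
  rw [Real.norm_eq_abs, show y - (y - α) = α by ring] at h
  rw [abs_mul, abs_div, abs_one]
  calc 1 / |α| * |∫ z in (y-α)..y, f z| ≤ 1 / |α| * (M * |α|) := by
        apply mul_le_mul_of_nonneg_left h (by positivity)
    _ = M := by field_simp

lemma fint_pos_cs (α : ℝ) (hα : 0 < α) (f : ℝ → ℝ) (hf : MemLp f 2 volume) (y : ℝ) :
    |fint α f y| ≤ (Real.sqrt α)⁻¹ * Real.sqrt (∫ x, (f x)^2) := by
  unfold fint
  have h := interval_cs f hf (a := y - α) (b := y) (by linarith)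
  rw [show y - (y - α) = α by ring] at h
  rw [abs_mul, abs_div, abs_one, abs_of_pos hα]
  calc 1 / α * |∫ z in (y-α)..y, f z| ≤ 1 / α * (Real.sqrt α * Real.sqrt (∫ x, (f x)^2)) := by
        apply mul_le_mul_of_nonneg_left h (by positivity)
    _ = (Real.sqrt α)⁻¹ * Real.sqrt (∫ x, (f x)^2) := by
        have h2 : Real.sqrt α * Real.sqrt α = α := Real.mul_self_sqrt hα.le
        have h0 : Real.sqrt α ≠ 0 := by positivity
        field_simp
        linear_combination Real.sqrt (∫ x, (f x)^2) * h2

lemma fint_neg_cs (α : ℝ) (hα : 0 < α) (f : ℝ → ℝ) (hf : MemLp f 2 volume) (y : ℝ) :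
    |fint (-α) f y| ≤ (Real.sqrt α)⁻¹ * Real.sqrt (∫ x, (f x)^2) := by
  rw [fint_neg α hα.ne' f y]
  have h := interval_cs f hf (a := y) (b := y + α) (by linarith)
  rw [show y + α - y = α by ring] at h
  rw [abs_mul, abs_div, abs_one, abs_of_pos hα]
  calc 1 / α * |∫ z in y..(y+α), f z| ≤ 1 / α * (Real.sqrt α * Real.sqrt (∫ x, (f x)^2)) := by
        apply mul_le_mul_of_nonneg_left h (by positivity)
    _ = (Real.sqrt α)⁻¹ * Real.sqrt (∫ x, (f x)^2) := by
        have h2 : Real.sqrt α * Real.sqrt α = α := Real.mul_self_sqrt hα.le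
        have h0 : Real.sqrt α ≠ 0 := by positivity
        field_simp
        linear_combination Real.sqrt (∫ x, (f x)^2) * h2

lemma fint_diff_le (α : ℝ) (hα : 0 < α) (f : ℝ → ℝ)
    (hfi : ∀ a b : ℝ, IntervalIntegrable f volume a b) (y C : ℝ)
    (hC : ∀ z, |f z - f (z + α)| ≤ C) :
    |fint α f y - fint (-α) f y| ≤ C := by
  have key : fint α f y - fint (-α) f y
      = (1/α) * ∫ z in (y-α)..y, (f z - f (z + α)) := by
    have h2 : ∫ z in (y-α)..y, f (z + α) = ∫ z in y..(y+α), f z := by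
      rw [intervalIntegral.integral_comp_add_right f α, show y - α + α = y by ring]
    rw [fint_neg α hα.ne' f y]
    unfold fint
    rw [intervalIntegral.integral_sub (hfi _ _) (by
      simpa using (hfi (y - α + α) (y + α)).comp_add_right α), h2]
    ring
  rw [key]
  have h := intervalIntegral.norm_integral_le_of_norm_le_const
    (a := y - α) (b := y) (C := C) (f := fun z => f z - f (z + α)) (fun x _ => hC x)
  rw [Real.norm_eq_abs, show y - (y - α) = α by ring, abs_of_pos hα] at h
  rw [abs_mul, abs_div, abs_one, abs_of_pos hα]
  calc 1 / α * |∫ z in (y-α)..y, (f z - f (z+α))| ≤ 1 / α * (C * α) := by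
        apply mul_le_mul_of_nonneg_left h (by positivity)
    _ = C := by field_simp

lemma holder_bound (g : ℝ → ℝ) (hdiff : Differentiable ℝ g)
    (hg' : MemLp (deriv g) 2 volume) {α : ℝ} (hα : 0 ≤ α) (z : ℝ) :
    |g z - g (z + α)| ≤ Real.sqrt α * Real.sqrt (∫ x, (deriv g x)^2) := by
  have ftc : ∫ x in z..(z+α), deriv g x = g (z+α) - g z :=
    integral_eq_sub_of_hasDerivAt (fun x _ => (hdiff x).hasDerivAt)
      (l2_intervalIntegrable _ hg' _ _)
  have h := interval_cs (deriv g) hg' (a := z) (b := z+α) (by linarith)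
  rw [ftc, show z + α - z = α by ring] at h
  calc |g z - g (z+α)| = |g (z+α) - g z| := abs_sub_comm _ _
    _ ≤ _ := h

lemma Ls_abs_le (s : ℝ) (hs : 0 < s) (z : ℝ) : |Ls s z| ≤ s := by
  unfold Ls
  rw [abs_mul]
  have h1 : |2 * s / Real.pi| = 2 * s / Real.pi := by
    rw [abs_of_pos]; positivity
  have h2 : |Real.arctan ((1 + s ^ 2 / 3) * z)| ≤ Real.pi / 2 := by
    rw [abs_le]
    exact ⟨(Real.neg_pi_div_two_lt_arctan _).le, (Real.arctan_lt_pi_div_two _).le⟩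
  rw [h1]
  calc 2 * s / Real.pi * |Real.arctan ((1 + s ^ 2 / 3) * z)|
      ≤ 2 * s / Real.pi * (Real.pi / 2) := by
        apply mul_le_mul_of_nonneg_left h2 (by positivity)
    _ = s := by field_simp

lemma Ls_diff_le (s : ℝ) (hs : 0 < s) (hs1 : s ≤ 1) (α : ℝ) (hα : 0 ≤ α) (z : ℝ) :
    |Ls s z - Ls s (z + α)| ≤ s * α := by
  unfold Ls
  rw [← mul_sub, abs_mul]
  have h1 : |2 * s / Real.pi| = 2 * s / Real.pi := by rw [abs_of_pos]; positivity
  have h2 := arctan_lip ((1 + s ^ 2 / 3) * z) ((1 + s ^ 2 / 3) * (z + α))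
  have h3 : |(1 + s ^ 2 / 3) * z - (1 + s ^ 2 / 3) * (z + α)| = (1 + s ^ 2 / 3) * α := by
    rw [show (1 + s ^ 2 / 3) * z - (1 + s ^ 2 / 3) * (z + α) = -((1 + s ^ 2 / 3) * α) by ring,
      abs_neg, abs_of_nonneg (by positivity)]
  rw [h1]
  have hpi := Real.pi_gt_three
  calc 2 * s / Real.pi * |Real.arctan ((1 + s ^ 2 / 3) * z)
        - Real.arctan ((1 + s ^ 2 / 3) * (z + α))|
      ≤ 2 * s / Real.pi * ((1 + s ^ 2 / 3) * α) := by
        apply mul_le_mul_of_nonneg_left (h2.trans (le_of_eq h3)) (by positivity)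
    _ ≤ s * α := by
        rw [div_mul_eq_mul_div, div_le_iff₀ (by linarith)]
        have h4 : s^3*α ≤ s*α := by
          nlinarith [mul_nonneg (by nlinarith : (0:ℝ) ≤ 1 - s^2) (mul_nonneg hs.le hα)]
        nlinarith [h4, mul_nonneg hs.le hα]

lemma Ls_continuous (s : ℝ) : Continuous (Ls s) := by
  unfold Ls
  exact continuous_const.mul (Real.continuous_arctan.comp (continuous_const.mul continuous_id))

end Aux

/-- Uniform bounds on `δ_α[L_s, g]` and `δ_α[g, h]` for odd `H¹` functions. -/
theorem deltaOp_H1_bounds :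
    ∃ C : ℝ, 0 < C ∧ ∀ s : ℝ, 0 < s → s ≤ 1 → ∀ α : ℝ, 0 < α → ∀ y : ℝ,
      ∀ g h : ℝ → ℝ, (∀ x : ℝ, g (-x) = - g x) → (∀ x : ℝ, h (-x) = - h x) →
      Differentiable ℝ g → Differentiable ℝ h →
      MemLp g 2 volume → MemLp (deriv g) 2 volume →
      MemLp h 2 volume → MemLp (deriv h) 2 volume →
      (|deltaOp α (Ls s) g y| ≤ C * s * H1norm g * min (α ^ ((1:ℝ)/2)) (α ^ (-(1:ℝ)/2))) ∧
      (|deltaOp α g h y| ≤ C * H1norm g * H1norm h * min (α ^ ((1:ℝ)/2)) α⁻¹) := by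
  refine ⟨4, by norm_num, fun s hs hs1 α hα y g h hgodd hhodd hgdiff hhdiff hg2 hg'2 hh2 hh'2 => ?_⟩
  -- abbreviations
  set Ag := Real.sqrt (∫ x, (g x)^2) with hAgdef
  set Bg := Real.sqrt (∫ x, (deriv g x)^2) with hBgdef
  set Ah := Real.sqrt (∫ x, (h x)^2) with hAhdef
  set Bh := Real.sqrt (∫ x, (deriv h x)^2) with hBhdef
  have hg2nn : (0:ℝ) ≤ ∫ x, (g x)^2 := integral_nonneg fun x => sq_nonneg _
  have hg'2nn : (0:ℝ) ≤ ∫ x, (deriv g x)^2 := integral_nonneg fun x => sq_nonneg _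
  have hh2nn : (0:ℝ) ≤ ∫ x, (h x)^2 := integral_nonneg fun x => sq_nonneg _
  have hh'2nn : (0:ℝ) ≤ ∫ x, (deriv h x)^2 := integral_nonneg fun x => sq_nonneg _
  have hHg0 : 0 ≤ H1norm g := Real.sqrt_nonneg _
  have hHh0 : 0 ≤ H1norm h := Real.sqrt_nonneg _
  have hAgH : Ag ≤ H1norm g := Real.sqrt_le_sqrt (by linarith)
  have hBgH : Bg ≤ H1norm g := Real.sqrt_le_sqrt (by linarith)
  have hAhH : Ah ≤ H1norm h := Real.sqrt_le_sqrt (by linarith)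
  have hBhH : Bh ≤ H1norm h := Real.sqrt_le_sqrt (by linarith)
  have hsupg : ∀ z, |g z| ≤ H1norm g := fun z => sup_bound g hgodd hgdiff hg2 hg'2 z
  have hsuph : ∀ z, |h z| ≤ H1norm h := fun z => sup_bound h hhodd hhdiff hh2 hh'2 z
  have hsa : 0 < Real.sqrt α := Real.sqrt_pos.mpr hα
  -- interval integrability
  have hgi : ∀ a b : ℝ, IntervalIntegrable g volume a b := l2_intervalIntegrable g hg2
  have hhi : ∀ a b : ℝ, IntervalIntegrable h volume a b := l2_intervalIntegrable h hh2
  have hLi : ∀ a b : ℝ, IntervalIntegrable (Ls s) volume a b :=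
    fun a b => (Ls_continuous s).intervalIntegrable a b
  -- average bounds
  have hFgp : |fint α g y| ≤ (Real.sqrt α)⁻¹ * Ag := fint_pos_cs α hα g hg2 y
  have hFgn : |fint (-α) g y| ≤ (Real.sqrt α)⁻¹ * Ag := fint_neg_cs α hα g hg2 y
  have hFhp : |fint α h y| ≤ (Real.sqrt α)⁻¹ * Ah := fint_pos_cs α hα h hh2 y
  have hFhn : |fint (-α) h y| ≤ (Real.sqrt α)⁻¹ * Ah := fint_neg_cs α hα h hh2 y
  have hFgS : |fint α g y| ≤ H1norm g := fint_abs_le_const α hα.ne' g y _ hsupg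
  have hFgSn : |fint (-α) g y| ≤ H1norm g := fint_abs_le_const (-α) (by simpa using hα.ne') g y _ hsupg
  have hFhSn : |fint (-α) h y| ≤ H1norm h := fint_abs_le_const (-α) (by simpa using hα.ne') h y _ hsuph
  have hFLp : |fint α (Ls s) y| ≤ s := fint_abs_le_const α hα.ne' _ y s (Ls_abs_le s hs)
  have hFLn : |fint (-α) (Ls s) y| ≤ s :=
    fint_abs_le_const (-α) (by simpa using hα.ne') _ y s (Ls_abs_le s hs)
  -- difference bounds
  have hDg : |fint α g y - fint (-α) g y| ≤ Real.sqrt α * Bg :=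
    fint_diff_le α hα g hgi y _ (fun z => holder_bound g hgdiff hg'2 hα.le z)
  have hDh : |fint α h y - fint (-α) h y| ≤ Real.sqrt α * Bh :=
    fint_diff_le α hα h hhi y _ (fun z => holder_bound h hhdiff hh'2 hα.le z)
  have hDL : |fint α (Ls s) y - fint (-α) (Ls s) y| ≤ s * α :=
    fint_diff_le α hα _ hLi y _ (fun z => Ls_diff_le s hs hs1 α hα.le z)
  have hDL2 : |fint α (Ls s) y - fint (-α) (Ls s) y| ≤ 2 * s :=
    (abs_sub _ _).trans (by linarith)
  have hDg2 : |fint α g y - fint (-α) g y| ≤ 2 * ((Real.sqrt α)⁻¹ * Ag) :=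
    (abs_sub _ _).trans (by linarith)
  -- decomposition
  have hdec : ∀ f k : ℝ → ℝ, |deltaOp α f k y| ≤
      |fint α f y| * |fint α k y - fint (-α) k y|
      + |fint α f y - fint (-α) f y| * |fint (-α) k y| := by
    intro f k
    have : deltaOp α f k y = fint α f y * (fint α k y - fint (-α) k y)
        + (fint α f y - fint (-α) f y) * fint (-α) k y := by
      unfold deltaOp; ring
    rw [this]
    exact (abs_add_le _ _).trans (by rw [abs_mul, abs_mul])
  -- rpow arithmetic
  have hrp1 : α ^ ((1:ℝ)/2) = Real.sqrt α := (Real.sqrt_eq_rpow α).symm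
  have hrp2 : α ^ (-(1:ℝ)/2) = (Real.sqrt α)⁻¹ := by
    rw [show -(1:ℝ)/2 = -(1/2) by norm_num, Real.rpow_neg hα.le, hrp1.symm]
  have hss : Real.sqrt α * Real.sqrt α = α := Real.mul_self_sqrt hα.le
  constructor
  · -- part 1
    rw [hrp1, hrp2]
    rcases le_total α 1 with hα1 | hα1
    · -- small α : min = sqrt α
      have h1 : Real.sqrt α ≤ 1 := by
        rw [show (1:ℝ) = Real.sqrt 1 by simp]; exact Real.sqrt_le_sqrt hα1
      have hmin : min (Real.sqrt α) (Real.sqrt α)⁻¹ = Real.sqrt α :=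
        min_eq_left (le_trans h1 ((one_le_inv₀ hsa).mpr h1))
      rw [hmin]
      have hαs : α ≤ Real.sqrt α := by
        calc α = Real.sqrt α * Real.sqrt α := hss.symm
          _ ≤ Real.sqrt α * 1 := mul_le_mul_of_nonneg_left h1 hsa.le
          _ = Real.sqrt α := mul_one _
      have e1 : |fint α (Ls s) y| * |fint α g y - fint (-α) g y| ≤ s * (Real.sqrt α * Bg) :=
        mul_le_mul hFLp hDg (abs_nonneg _) hs.le
      have e2 : |fint α (Ls s) y - fint (-α) (Ls s) y| * |fint (-α) g y|
          ≤ (s * α) * H1norm g :=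
        mul_le_mul hDL hFgSn (abs_nonneg _) (by positivity)
      have c1 : s * (Real.sqrt α * Bg) ≤ s * (Real.sqrt α * H1norm g) :=
        mul_le_mul_of_nonneg_left (mul_le_mul_of_nonneg_left hBgH hsa.le) hs.le
      have c2 : (s * α) * H1norm g ≤ (s * Real.sqrt α) * H1norm g :=
        mul_le_mul_of_nonneg_right (mul_le_mul_of_nonneg_left hαs hs.le) hHg0
      have hX : 0 ≤ s * H1norm g * Real.sqrt α := by positivity
      calc |deltaOp α (Ls s) g y| ≤ _ := hdec (Ls s) g
        _ ≤ s * (Real.sqrt α * H1norm g) + (s * Real.sqrt α) * H1norm g := by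
            linarith [e1, e2, c1, c2]
        _ = 2 * (s * H1norm g * Real.sqrt α) := by ring
        _ ≤ 4 * s * H1norm g * Real.sqrt α := by linarith [hX]
    · -- large α : min = (sqrt α)⁻¹
      have h1 : 1 ≤ Real.sqrt α := by
        rw [show (1:ℝ) = Real.sqrt 1 by simp]; exact Real.sqrt_le_sqrt hα1
      have hmin : min (Real.sqrt α) (Real.sqrt α)⁻¹ = (Real.sqrt α)⁻¹ :=
        min_eq_right (le_trans (inv_le_one_of_one_le₀ h1) h1)
      rw [hmin]
      have e1 : |fint α (Ls s) y| * |fint α g y - fint (-α) g y|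
          ≤ s * (2 * ((Real.sqrt α)⁻¹ * Ag)) :=
        mul_le_mul hFLp hDg2 (abs_nonneg _) hs.le
      have e2 : |fint α (Ls s) y - fint (-α) (Ls s) y| * |fint (-α) g y|
          ≤ (2 * s) * ((Real.sqrt α)⁻¹ * Ag) :=
        mul_le_mul hDL2 hFgn (abs_nonneg _) (by positivity)
      have c1 : (Real.sqrt α)⁻¹ * Ag ≤ (Real.sqrt α)⁻¹ * H1norm g :=
        mul_le_mul_of_nonneg_left hAgH (by positivity)
      calc |deltaOp α (Ls s) g y| ≤ _ := hdec (Ls s) g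
        _ ≤ s * (2 * ((Real.sqrt α)⁻¹ * Ag)) + (2 * s) * ((Real.sqrt α)⁻¹ * Ag) := by
            linarith [e1, e2]
        _ = 4 * (s * ((Real.sqrt α)⁻¹ * Ag)) := by ring
        _ ≤ 4 * (s * ((Real.sqrt α)⁻¹ * H1norm g)) := by
            have := mul_le_mul_of_nonneg_left c1 hs.le
            linarith
        _ = 4 * s * H1norm g * (Real.sqrt α)⁻¹ := by ring
  · -- part 2
    rw [hrp1]
    rcases le_total α 1 with hα1 | hα1
    · have h1 : Real.sqrt α ≤ 1 := by
        rw [show (1:ℝ) = Real.sqrt 1 by simp]; exact Real.sqrt_le_sqrt hα1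
      have hmin : min (Real.sqrt α) α⁻¹ = Real.sqrt α :=
        min_eq_left (le_trans h1 ((one_le_inv₀ hα).mpr hα1))
      rw [hmin]
      have e1 : |fint α g y| * |fint α h y - fint (-α) h y|
          ≤ H1norm g * (Real.sqrt α * Bh) :=
        mul_le_mul hFgS hDh (abs_nonneg _) hHg0
      have e2 : |fint α g y - fint (-α) g y| * |fint (-α) h y|
          ≤ (Real.sqrt α * Bg) * H1norm h :=
        mul_le_mul hDg hFhSn (abs_nonneg _) (by positivity)
      have k1 : H1norm g * (Real.sqrt α * Bh) ≤ H1norm g * (Real.sqrt α * H1norm h) := by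
        apply mul_le_mul_of_nonneg_left _ hHg0
        exact mul_le_mul_of_nonneg_left hBhH hsa.le
      have k2 : (Real.sqrt α * Bg) * H1norm h ≤ (Real.sqrt α * H1norm g) * H1norm h := by
        apply mul_le_mul_of_nonneg_right _ hHh0
        exact mul_le_mul_of_nonneg_left hBgH hsa.le
      have hX : 0 ≤ H1norm g * H1norm h * Real.sqrt α := by positivity
      calc |deltaOp α g h y| ≤ _ := hdec g h
        _ ≤ H1norm g * (Real.sqrt α * H1norm h) + (Real.sqrt α * H1norm g) * H1norm h := by
            linarith [e1, e2, k1, k2]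
        _ = 2 * (H1norm g * H1norm h * Real.sqrt α) := by ring
        _ ≤ 4 * H1norm g * H1norm h * Real.sqrt α := by linarith [hX]
    · have h1 : 1 ≤ Real.sqrt α := by
        rw [show (1:ℝ) = Real.sqrt 1 by simp]; exact Real.sqrt_le_sqrt hα1
      have hmin : min (Real.sqrt α) α⁻¹ = α⁻¹ :=
        min_eq_right (le_trans (inv_le_one_of_one_le₀ hα1) h1)
      rw [hmin]
      have hDh2 : |fint α h y - fint (-α) h y| ≤ 2 * ((Real.sqrt α)⁻¹ * Ah) :=
        (abs_sub _ _).trans (by linarith)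
      have e1 : |fint α g y| * |fint α h y - fint (-α) h y|
          ≤ ((Real.sqrt α)⁻¹ * Ag) * (2 * ((Real.sqrt α)⁻¹ * Ah)) :=
        mul_le_mul hFgp hDh2 (abs_nonneg _) (by positivity)
      have e2 : |fint α g y - fint (-α) g y| * |fint (-α) h y|
          ≤ (2 * ((Real.sqrt α)⁻¹ * Ag)) * ((Real.sqrt α)⁻¹ * Ah) :=
        mul_le_mul hDg2 hFhn (abs_nonneg _) (by positivity)
      have hAg0 : 0 ≤ Ag := Real.sqrt_nonneg _
      have hAh0 : 0 ≤ Ah := Real.sqrt_nonneg _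
      have hinv : (Real.sqrt α)⁻¹ * (Real.sqrt α)⁻¹ = α⁻¹ := by
        rw [← mul_inv, hss]
      have key : ((Real.sqrt α)⁻¹ * Ag) * ((Real.sqrt α)⁻¹ * Ah)
          ≤ α⁻¹ * (H1norm g * H1norm h) := by
        rw [show ((Real.sqrt α)⁻¹ * Ag) * ((Real.sqrt α)⁻¹ * Ah)
            = ((Real.sqrt α)⁻¹ * (Real.sqrt α)⁻¹) * (Ag * Ah) by ring, hinv]
        apply mul_le_mul_of_nonneg_left _ (by positivity)
        exact mul_le_mul hAgH hAhH hAh0 hHg0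
      calc |deltaOp α g h y| ≤ _ := hdec g h
        _ ≤ ((Real.sqrt α)⁻¹ * Ag) * (2 * ((Real.sqrt α)⁻¹ * Ah))
            + (2 * ((Real.sqrt α)⁻¹ * Ag)) * ((Real.sqrt α)⁻¹ * Ah) := by
            linarith [e1, e2]
        _ = 4 * (((Real.sqrt α)⁻¹ * Ag) * ((Real.sqrt α)⁻¹ * Ah)) := by ring
        _ ≤ 4 * (α⁻¹ * (H1norm g * H1norm h)) := by linarith [key]
        _ = 4 * H1norm g * H1norm h * α⁻¹ := by ring
end

section
/- There is an absolute constant C such that for all s ∈ (0,1], all α > 0, all y ∈ ℝ and every continuous locally integrable g : ℝ → ℝ, the y-derivative of δ_α[L_s, g] exists and satisfies |α·∂_y δ_α[L_s, g](y)| ≤ C·s·( |g(y+α)| + |g(y)| + |g(y−α)| + (1/α)∫_{−α}^{α} |g(y+t)| dt ). -/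
open MeasureTheory Real Set Filter

/-- derivative of the sliding average of a continuous function -/
lemma hasDerivAt_fint (f : ℝ → ℝ) (hf : Continuous f) (α : ℝ) (y : ℝ) :
    HasDerivAt (fun z => fint α f z) (slopeOp α f y) y := by
  have hF : ∀ b : ℝ, HasDerivAt (fun u => ∫ x in (0:ℝ)..u, f x) (f b) b := fun b =>
    intervalIntegral.integral_hasDerivAt_right (hf.intervalIntegrable _ _)
      (hf.stronglyMeasurableAtFilter _ _) hf.continuousAt
  have key : (fun z => fint α f z)
      = fun z => (1/α) * ((∫ x in (0:ℝ)..z, f x) - ∫ x in (0:ℝ)..(z-α), f x) := by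
    funext z
    rw [fint, intervalIntegral.integral_interval_sub_left (hf.intervalIntegrable _ _)
      (hf.intervalIntegrable _ _)]
  rw [key]
  have h2 : HasDerivAt (fun z : ℝ => ∫ x in (0:ℝ)..(z-α), f x) (f (y-α)) y := by
    have := (hF (y-α)).comp y ((hasDerivAt_id y).sub_const α)
    simpa [Function.comp_def] using this
  have := ((hF y).sub h2).const_mul (1/α)
  refine this.congr_deriv ?_
  rw [slopeOp]; ring

/-- bound on `Ls` -/
lemma abs_Ls_le (s : ℝ) (hs : 0 < s) (x : ℝ) : |Ls s x| ≤ s := by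
  rw [Ls, abs_mul]
  have h1 : |Real.arctan ((1 + s ^ 2 / 3) * x)| ≤ π / 2 := by
    rw [abs_le]
    exact ⟨(Real.neg_pi_div_two_lt_arctan _).le, (Real.arctan_lt_pi_div_two _).le⟩
  have hπ := Real.pi_pos
  have h2 : |2 * s / π| = 2 * s / π := abs_of_pos (by positivity)
  rw [h2]
  calc 2 * s / π * |Real.arctan ((1 + s ^ 2 / 3) * x)| ≤ 2 * s / π * (π / 2) := by
        apply mul_le_mul_of_nonneg_left h1 (by positivity)
    _ = s := by field_simp

lemma abs_fint_le (f : ℝ → ℝ) (C : ℝ) (hC : ∀ x, |f x| ≤ C) (α : ℝ) (hα : α ≠ 0) (y : ℝ) :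
    |fint α f y| ≤ C := by
  have h := intervalIntegral.norm_integral_le_of_norm_le_const
    (C := C) (f := f) (a := y - α) (b := y) (fun x _ => hC x)
  rw [fint, abs_mul, abs_div, abs_one]
  rw [Real.norm_eq_abs, sub_sub_cancel] at h
  calc 1 / |α| * |∫ z in (y - α)..y, f z| ≤ 1 / |α| * (C * |α|) := by
        apply mul_le_mul_of_nonneg_left h (by positivity)
    _ = C := by field_simp

/-- A `y`-derivative on `δ_α[L_s, g]` costs a power of `α⁻¹`. -/
theorem deltaOp_deriv_bound :
    ∃ C : ℝ, 0 < C ∧ ∀ s : ℝ, 0 < s → s ≤ 1 → ∀ α : ℝ, 0 < α →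
      ∀ g : ℝ → ℝ, Continuous g → LocallyIntegrable g → ∀ y : ℝ,
        ∃ d : ℝ, HasDerivAt (fun z => deltaOp α (Ls s) g z) d y ∧
          |α * d| ≤ C * s * (|g (y + α)| + |g y| + |g (y - α)|
            + (1 / α) * ∫ t in (-α)..α, |g (y + t)|) := by
  refine ⟨4, by norm_num, ?_⟩
  intro s hs hs1 α hα g hg hgl y
  have hαne : α ≠ 0 := ne_of_gt hα
  have hf : Continuous (Ls s) :=
    continuous_const.mul (Real.continuous_arctan.comp (continuous_const.mul continuous_id))
  set f := Ls s with hfdef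
  have hd1 := hasDerivAt_fint f hf α y
  have hd2 := hasDerivAt_fint g hg α y
  have hd3 := hasDerivAt_fint f hf (-α) y
  have hd4 := hasDerivAt_fint g hg (-α) y
  have hD : HasDerivAt (fun z => deltaOp α f g z)
      ((slopeOp α f y * fint α g y + fint α f y * slopeOp α g y)
        - (slopeOp (-α) f y * fint (-α) g y + fint (-α) f y * slopeOp (-α) g y)) y := by
    have := (hd1.mul hd2).sub (hd3.mul hd4)
    exact this
  refine ⟨_, hD, ?_⟩
  set I := ∫ t in (-α)..α, |g (y + t)| with hIdef
  have hI0 : 0 ≤ I := intervalIntegral.integral_nonneg (by linarith) (fun t _ => abs_nonneg _)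
  -- bound the averages of g
  have hGint : IntervalIntegrable (fun t => |g (y + t)|) volume (-α) α :=
    ((hg.comp (continuous_const.add continuous_id)).abs).intervalIntegrable _ _
  have hG1 : |fint α g y| ≤ (1/α) * I := by
    rw [fint, abs_mul, abs_div, abs_one, abs_of_pos hα]
    apply mul_le_mul_of_nonneg_left _ (by positivity)
    have e1 : (∫ z in (y - α)..y, g z) = ∫ t in (-α)..(0:ℝ), g (y + t) := by
      rw [intervalIntegral.integral_comp_add_left]
      norm_num [sub_eq_add_neg]
    rw [e1]
    calc |∫ t in (-α)..(0:ℝ), g (y + t)| ≤ ∫ t in (-α)..(0:ℝ), |g (y + t)| :=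
          intervalIntegral.abs_integral_le_integral_abs (by linarith)
      _ ≤ I := intervalIntegral.integral_mono_interval le_rfl (by linarith) (by linarith)
          (Filter.Eventually.of_forall fun t => abs_nonneg _) hGint
  have hG2 : |fint (-α) g y| ≤ (1/α) * I := by
    rw [fint, abs_mul, abs_div, abs_one, abs_neg, abs_of_pos hα]
    apply mul_le_mul_of_nonneg_left _ (by positivity)
    have e1 : (∫ z in (y - -α)..y, g z) = ∫ t in α..(0:ℝ), g (y + t) := by
      rw [intervalIntegral.integral_comp_add_left]
      norm_num [sub_eq_add_neg, sub_neg_eq_add]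
    rw [e1, intervalIntegral.integral_symm, abs_neg]
    calc |∫ t in (0:ℝ)..α, g (y + t)| ≤ ∫ t in (0:ℝ)..α, |g (y + t)| :=
          intervalIntegral.abs_integral_le_integral_abs (by linarith)
      _ ≤ I := intervalIntegral.integral_mono_interval (by linarith) (by linarith) le_rfl
          (Filter.Eventually.of_forall fun t => abs_nonneg _) hGint
  -- bounds on f
  have hfb : ∀ x, |f x| ≤ s := abs_Ls_le s hs
  have hF1 : |fint α f y| ≤ s := abs_fint_le f s hfb α hαne y
  have hF2 : |fint (-α) f y| ≤ s := abs_fint_le f s hfb (-α) (by simpa using hαne) y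
  -- rewrite α * d
  set Fα := fint α f y; set Gα := fint α g y; set Fm := fint (-α) f y; set Gm := fint (-α) g y
  have hrw : α * ((slopeOp α f y * Gα + Fα * slopeOp α g y)
        - (slopeOp (-α) f y * Gm + Fm * slopeOp (-α) g y))
      = (f y - f (y - α)) * Gα + Fα * (g y - g (y - α))
        + ((f y - f (y + α)) * Gm + Fm * (g y - g (y + α))) := by
    simp only [slopeOp, sub_neg_eq_add]
    field_simp [hαne]
    ring
  rw [hrw]
  -- per-term bounds
  have t1 : |(f y - f (y - α)) * Gα| ≤ 2 * s * ((1/α) * I) := by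
    rw [abs_mul]
    apply mul_le_mul _ hG1 (abs_nonneg _) (by positivity)
    calc |f y - f (y - α)| ≤ |f y| + |f (y - α)| := abs_sub _ _
      _ ≤ 2 * s := by have := hfb y; have := hfb (y - α); linarith
  have t2 : |Fα * (g y - g (y - α))| ≤ s * (|g y| + |g (y - α)|) := by
    rw [abs_mul]
    exact mul_le_mul hF1 (abs_sub _ _) (abs_nonneg _) hs.le
  have t3 : |(f y - f (y + α)) * Gm| ≤ 2 * s * ((1/α) * I) := by
    rw [abs_mul]
    apply mul_le_mul _ hG2 (abs_nonneg _) (by positivity)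
    calc |f y - f (y + α)| ≤ |f y| + |f (y + α)| := abs_sub _ _
      _ ≤ 2 * s := by have := hfb y; have := hfb (y + α); linarith
  have t4 : |Fm * (g y - g (y + α))| ≤ s * (|g y| + |g (y + α)|) := by
    rw [abs_mul]
    exact mul_le_mul hF2 (abs_sub _ _) (abs_nonneg _) hs.le
  have tri : |(f y - f (y - α)) * Gα + Fα * (g y - g (y - α))
        + ((f y - f (y + α)) * Gm + Fm * (g y - g (y + α)))|
      ≤ |(f y - f (y - α)) * Gα| + |Fα * (g y - g (y - α))|
        + (|(f y - f (y + α)) * Gm| + |Fm * (g y - g (y + α))|) :=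
    (abs_add_le _ _).trans (add_le_add (abs_add_le _ _) (abs_add_le _ _))
  have hsA := mul_nonneg hs.le (abs_nonneg (g (y + α)))
  have hsB := mul_nonneg hs.le (abs_nonneg (g y))
  have hsC := mul_nonneg hs.le (abs_nonneg (g (y - α)))
  nlinarith [tri, t1, t2, t3, t4]
end
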